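/- The CES production function Q(K,L) = F·(a·K^(−r) + (1−a)·L^(−r))^(−1/r) is concave on the open positive quadrant {(K,L) : K > 0, L > 0}, provided F > 0, 0 < a < 1, and r > −1 with r ≠ 0. -/

import Mathlib

open Real

private lemma holder2 {q x₁ x₂ y₁ y₂ : ℝ} (hq0 : 0 < q) (hq1 : q < 1)
    (hx₁ : 0 < x₁) (hx₂ : 0 < x₂) (hy₁ : 0 < y₁) (hy₂ : 0 < y₂) :
    x₁ ^ q * y₁ ^ (1 - q) + x₂ ^ q * y₂ ^ (1 - q) ≤ (x₁ + x₂) ^ q * (y₁ + y₂) ^ (1 - q) := by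
  set X := x₁ + x₂ with hXdef
  set Y := y₁ + y₂ with hYdef
  have hX : 0 < X := by positivity
  have hY : 0 < Y := by positivity
  have key : ∀ x y : ℝ, 0 < x → 0 < y →
      x ^ q * y ^ (1 - q) ≤ X ^ q * Y ^ (1 - q) * (q * (x / X) + (1 - q) * (y / Y)) := by
    intro x y hx hy
    have h1 : x ^ q * y ^ (1 - q) = X ^ q * Y ^ (1 - q) * ((x / X) ^ q * (y / Y) ^ (1 - q)) := by
      rw [Real.div_rpow hx.le hX.le, Real.div_rpow hy.le hY.le]
      field_simp
    rw [h1]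
    have h2 : (x / X) ^ q * (y / Y) ^ (1 - q) ≤ q * (x / X) + (1 - q) * (y / Y) :=
      Real.geom_mean_le_arith_mean2_weighted hq0.le (by linarith) (by positivity) (by positivity)
        (by ring)
    exact mul_le_mul_of_nonneg_left h2 (by positivity)
  have h1 := key x₁ y₁ hx₁ hy₁
  have h2 := key x₂ y₂ hx₂ hy₂
  have hsum : (q * (x₁ / X) + (1 - q) * (y₁ / Y)) + (q * (x₂ / X) + (1 - q) * (y₂ / Y)) = 1 := by
    field_simp
    ring
  nlinarith [mul_pos (Real.rpow_pos_of_pos hX q) (Real.rpow_pos_of_pos hY (1 - q))]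

private lemma holder2_neg {q x₁ x₂ y₁ y₂ : ℝ} (hq : q < 0)
    (hx₁ : 0 < x₁) (hx₂ : 0 < x₂) (hy₁ : 0 < y₁) (hy₂ : 0 < y₂) :
    (x₁ + x₂) ^ q * (y₁ + y₂) ^ (1 - q) ≤ x₁ ^ q * y₁ ^ (1 - q) + x₂ ^ q * y₂ ^ (1 - q) := by
  set θ : ℝ := (1 - q)⁻¹ with hθdef
  have h1q : (0:ℝ) < 1 - q := by linarith
  have hθ0 : 0 < θ := by positivity
  have hθ1 : θ < 1 := by
    rw [hθdef, inv_lt_one_iff₀]; right; linarith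
  set z₁ := x₁ ^ q * y₁ ^ (1 - q) with hz₁
  set z₂ := x₂ ^ q * y₂ ^ (1 - q) with hz₂
  have hz₁0 : 0 < z₁ := by positivity
  have hz₂0 : 0 < z₂ := by positivity
  have key : ∀ x y : ℝ, 0 < x → 0 < y → (x ^ q * y ^ (1 - q)) ^ θ * x ^ (1 - θ) = y := by
    intro x y hx hy
    rw [Real.mul_rpow (by positivity) (by positivity), ← Real.rpow_mul hx.le,
      ← Real.rpow_mul hy.le]
    have e2 : (1 - q) * θ = 1 := mul_inv_cancel₀ h1q.ne'
    have e1 : q * θ + (1 - θ) = 0 := by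
      rw [hθdef]; field_simp; ring
    calc x ^ (q * θ) * y ^ ((1 - q) * θ) * x ^ (1 - θ)
        = x ^ (q * θ + (1 - θ)) * y ^ ((1 - q) * θ) := by
          rw [Real.rpow_add hx]; ring
      _ = y := by rw [e1, e2, Real.rpow_zero, Real.rpow_one, one_mul]
  have H := holder2 hθ0 hθ1 hz₁0 hz₂0 hx₁ hx₂
  rw [key x₁ y₁ hx₁ hy₁, key x₂ y₂ hx₂ hy₂] at H
  -- H : y₁ + y₂ ≤ (z₁ + z₂) ^ θ * (x₁ + x₂) ^ (1 - θ)
  have hX : 0 < x₁ + x₂ := by positivity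
  have hZ : 0 < z₁ + z₂ := by positivity
  have H2 : (y₁ + y₂) ^ (1 - q) ≤ ((z₁ + z₂) ^ θ * (x₁ + x₂) ^ (1 - θ)) ^ (1 - q) :=
    Real.rpow_le_rpow (by positivity) H (by linarith)
  have H3 : ((z₁ + z₂) ^ θ * (x₁ + x₂) ^ (1 - θ)) ^ (1 - q)
      = (z₁ + z₂) * (x₁ + x₂) ^ (-q) := by
    rw [Real.mul_rpow (by positivity) (by positivity), ← Real.rpow_mul hZ.le,
      ← Real.rpow_mul hX.le]
    have e2 : θ * (1 - q) = 1 := inv_mul_cancel₀ h1q.ne'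
    have e1 : (1 - θ) * (1 - q) = -q := by rw [hθdef]; field_simp; ring
    rw [e1, e2, Real.rpow_one]
  rw [H3] at H2
  have H4 : (x₁ + x₂) ^ q * (y₁ + y₂) ^ (1 - q)
      ≤ (x₁ + x₂) ^ q * ((z₁ + z₂) * (x₁ + x₂) ^ (-q)) :=
    mul_le_mul_of_nonneg_left H2 (by positivity)
  have H5 : (x₁ + x₂) ^ q * (x₁ + x₂) ^ (-q) = 1 := by
    rw [← Real.rpow_add hX]; simp
  calc (x₁ + x₂) ^ q * (y₁ + y₂) ^ (1 - q)
      ≤ (x₁ + x₂) ^ q * ((z₁ + z₂) * (x₁ + x₂) ^ (-q)) := H4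
    _ = ((x₁ + x₂) ^ q * (x₁ + x₂) ^ (-q)) * (z₁ + z₂) := by ring
    _ = z₁ + z₂ := by rw [H5, one_mul]

private lemma pow_split {c B X q : ℝ} (hc : 0 < c) (hB : 0 < B) (hX : 0 < X) :
    (c * B ^ (q - 1) * X) ^ q * (c * B ^ q) ^ (1 - q) = c * X ^ q := by
  have h1 : c ^ q * c ^ (1 - q) = c := by
    rw [← Real.rpow_add hc]; norm_num
  have h2 : B ^ ((q - 1) * q) * B ^ (q * (1 - q)) = 1 := by
    rw [← Real.rpow_add hB, show (q - 1) * q + q * (1 - q) = 0 by ring, Real.rpow_zero]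
  calc (c * B ^ (q - 1) * X) ^ q * (c * B ^ q) ^ (1 - q)
      = (c ^ q * c ^ (1 - q)) * (B ^ ((q - 1) * q) * B ^ (q * (1 - q))) * X ^ q := by
        rw [Real.mul_rpow (by positivity) hX.le, Real.mul_rpow hc.le (by positivity),
          Real.mul_rpow hc.le (by positivity), ← Real.rpow_mul hB.le, ← Real.rpow_mul hB.le]
        ring
    _ = c * X ^ q := by rw [h1, h2, mul_one]

/-- Tangent-plane inequality for the (unscaled) CES function. -/
private lemma ces_tangent {a q K L K₀ L₀ : ℝ} (ha0 : 0 < a) (ha1 : a < 1)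
    (hq1 : q < 1) (hq0 : q ≠ 0) (hK : 0 < K) (hL : 0 < L) (hK₀ : 0 < K₀) (hL₀ : 0 < L₀) :
    (a * K ^ q + (1 - a) * L ^ q) ^ (1 / q) ≤
      (a * K₀ ^ q + (1 - a) * L₀ ^ q) ^ (1 / q - 1) *
        (a * K₀ ^ (q - 1) * K + (1 - a) * L₀ ^ (q - 1) * L) := by
  have ha1' : (0:ℝ) < 1 - a := by linarith
  set x₁ := a * K₀ ^ (q - 1) * K with hx₁
  set x₂ := (1 - a) * L₀ ^ (q - 1) * L with hx₂
  set y₁ := a * K₀ ^ q with hy₁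
  set y₂ := (1 - a) * L₀ ^ q with hy₂
  have hx₁0 : 0 < x₁ := by positivity
  have hx₂0 : 0 < x₂ := by positivity
  have hy₁0 : 0 < y₁ := by positivity
  have hy₂0 : 0 < y₂ := by positivity
  have hsplit1 : x₁ ^ q * y₁ ^ (1 - q) = a * K ^ q := pow_split ha0 hK₀ hK
  have hsplit2 : x₂ ^ q * y₂ ^ (1 - q) = (1 - a) * L ^ q := pow_split ha1' hL₀ hL
  have hu : 0 < a * K ^ q + (1 - a) * L ^ q := by positivity
  have hv : 0 < x₁ + x₂ := by positivity
  have hu₀ : 0 < y₁ + y₂ := by positivity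
  have hmain : a * K ^ q + (1 - a) * L ^ q ≥ (x₁ + x₂) ^ q * (y₁ + y₂) ^ (1 - q) ∨
      True := Or.inr trivial
  have hgoal : (a * K ^ q + (1 - a) * L ^ q) ^ (1 / q) ≤
      (x₁ + x₂) * (y₁ + y₂) ^ (1 / q - 1) := by
    have hident : ((x₁ + x₂) ^ q * (y₁ + y₂) ^ (1 - q)) ^ (1 / q)
        = (x₁ + x₂) * (y₁ + y₂) ^ (1 / q - 1) := by
      rw [Real.mul_rpow (by positivity) (by positivity), ← Real.rpow_mul hv.le,
        ← Real.rpow_mul hu₀.le, show q * (1 / q) = 1 by field_simp,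
        show (1 - q) * (1 / q) = 1 / q - 1 by field_simp, Real.rpow_one]
    rcases lt_or_gt_of_ne hq0 with hqneg | hqpos
    · -- q < 0 : reverse Hölder, then antitone rpow
      have H := holder2_neg hqneg hx₁0 hx₂0 hy₁0 hy₂0
      rw [hsplit1, hsplit2] at H
      have h2 : (a * K ^ q + (1 - a) * L ^ q) ^ (1 / q)
          ≤ ((x₁ + x₂) ^ q * (y₁ + y₂) ^ (1 - q)) ^ (1 / q) := by
        apply Real.rpow_le_rpow_of_nonpos (by positivity) H
        apply div_nonpos_of_nonneg_of_nonpos <;> [norm_num; exact hqneg.le]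
      rw [hident] at h2; exact h2
    · -- 0 < q < 1 : Hölder, then monotone rpow
      have H := holder2 hqpos hq1 hx₁0 hx₂0 hy₁0 hy₂0
      rw [hsplit1, hsplit2] at H
      have h2 : (a * K ^ q + (1 - a) * L ^ q) ^ (1 / q)
          ≤ ((x₁ + x₂) ^ q * (y₁ + y₂) ^ (1 - q)) ^ (1 / q) :=
        Real.rpow_le_rpow hu.le H (by positivity)
      rw [hident] at h2; exact h2
  calc (a * K ^ q + (1 - a) * L ^ q) ^ (1 / q)
      ≤ (x₁ + x₂) * (y₁ + y₂) ^ (1 / q - 1) := hgoal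
    _ = (a * K₀ ^ q + (1 - a) * L₀ ^ q) ^ (1 / q - 1) *
        (a * K₀ ^ (q - 1) * K + (1 - a) * L₀ ^ (q - 1) * L) := by
      rw [hx₁, hx₂, hy₁, hy₂]; ring

/-- The CES production function. -/
noncomputable def ces (F a r K L : ℝ) : ℝ :=
  F * (a * K ^ (-r) + (1 - a) * L ^ (-r)) ^ (-1 / r)

/-- the CES function is concave on the open positive quadrant. -/
theorem ces_concave (F a r : ℝ) (hF : 0 < F) (ha0 : 0 < a) (ha1 : a < 1)
    (hr : -1 < r) (hr0 : r ≠ 0) :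
    ConcaveOn ℝ {p : ℝ × ℝ | 0 < p.1 ∧ 0 < p.2} (fun p => ces F a r p.1 p.2) := by
  constructor
  · exact (convex_Ioi (0:ℝ)).prod (convex_Ioi (0:ℝ))
  · intro x hx y hy t s ht hs hts
    obtain ⟨hx1, hx2⟩ := hx
    obtain ⟨hy1, hy2⟩ := hy
    rcases eq_or_lt_of_le ht with h | htpos
    · have hs1 : s = 1 := by linarith
      simp [← h, hs1]
    rcases eq_or_lt_of_le hs with h | hspos
    · have ht1 : t = 1 := by linarith
      simp [← h, ht1]
    have hfst : (t • x + s • y).1 = t * x.1 + s * y.1 := rfl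
    have hsnd : (t • x + s • y).2 = t * x.2 + s * y.2 := rfl
    have hzK : 0 < t * x.1 + s * y.1 := by positivity
    have hzL : 0 < t * x.2 + s * y.2 := by positivity
    simp only [smul_eq_mul, ces, hfst, hsnd]
    have hdiv : -1 / r = 1 / (-r) := by rw [div_neg, neg_div]
    rw [hdiv]
    set q : ℝ := -r with hqdef
    have hq1 : q < 1 := by rw [hqdef]; linarith
    have hq0 : q ≠ 0 := by rw [hqdef]; exact neg_ne_zero.mpr hr0
    set zK : ℝ := t * x.1 + s * y.1 with hzKdef
    set zL : ℝ := t * x.2 + s * y.2 with hzLdef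
    set C : ℝ := (a * zK ^ q + (1 - a) * zL ^ q) ^ (1 / q - 1) with hCdef
    have T1 := ces_tangent ha0 ha1 hq1 hq0 hx1 hx2 hzK hzL
    have T2 := ces_tangent ha0 ha1 hq1 hq0 hy1 hy2 hzK hzL
    have hE1 : zK ^ (q - 1) * zK = zK ^ q := by
      rw [← Real.rpow_add_one hzK.ne' (q - 1)]; norm_num
    have hE2 : zL ^ (q - 1) * zL = zL ^ q := by
      rw [← Real.rpow_add_one hzL.ne' (q - 1)]; norm_num
    have hu : 0 < a * zK ^ q + (1 - a) * zL ^ q := by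
      have : (0:ℝ) < 1 - a := by linarith
      positivity
    have hE : C * (a * zK ^ (q - 1) * zK + (1 - a) * zL ^ (q - 1) * zL)
        = (a * zK ^ q + (1 - a) * zL ^ q) ^ (1 / q) := by
      rw [mul_assoc a, mul_assoc (1 - a), hE1, hE2, hCdef,
        ← Real.rpow_add_one hu.ne' (1 / q - 1)]
      norm_num
    calc t * (F * (a * x.1 ^ q + (1 - a) * x.2 ^ q) ^ (1 / q))
          + s * (F * (a * y.1 ^ q + (1 - a) * y.2 ^ q) ^ (1 / q))
        ≤ t * (F * (C * (a * zK ^ (q - 1) * x.1 + (1 - a) * zL ^ (q - 1) * x.2)))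
          + s * (F * (C * (a * zK ^ (q - 1) * y.1 + (1 - a) * zL ^ (q - 1) * y.2))) := by
          apply add_le_add
          · exact mul_le_mul_of_nonneg_left (mul_le_mul_of_nonneg_left T1 hF.le) htpos.le
          · exact mul_le_mul_of_nonneg_left (mul_le_mul_of_nonneg_left T2 hF.le) hspos.le
      _ = F * (C * (a * zK ^ (q - 1) * zK + (1 - a) * zL ^ (q - 1) * zL)) := by
          rw [hzKdef, hzLdef]; ring
      _ = F * (a * zK ^ q + (1 - a) * zL ^ q) ^ (1 / q) := by rw [hE]
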